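/- arXiv:2301.03248 — 12 statements merged into one kernel-verified Lean document; each statement's English description precedes it below -/
import Mathlib

section
/- For every domain G ⊊ ℝⁿ, every α > 0, and all points x, y ∈ G, the inequality min{1, 2/√α} · j*_G(x,y) ≤ p^α_G(x,y) holds. -/
/-- For every domain `G ⊊ ℝⁿ`, every `α > 0`, and all `x, y ∈ G`,
`min {1, 2/√α} · j*_G(x,y) ≤ p^α_G(x,y)`, where
`p^α_G(x,y) = |x−y| / √(|x−y|² + α·d_G(x)·d_G(y))` and
`j*_G(x,y) = |x−y| / (|x−y| + 2·min{d_G(x), d_G(y)})`. -/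
theorem stmt_0 (n : ℕ) (hn : 1 ≤ n) (G : Set (EuclideanSpace ℝ (Fin n)))
    (hGopen : IsOpen G) (hGconn : IsConnected G) (hGproper : G ≠ Set.univ)
    (α : ℝ) (hα : 0 < α)
    (x y : EuclideanSpace ℝ (Fin n)) (hx : x ∈ G) (hy : y ∈ G) :
    min 1 (2 / Real.sqrt α) *
        (dist x y /
          (dist x y + 2 * min (Metric.infDist x (frontier G)) (Metric.infDist y (frontier G)))) ≤
      dist x y /
        Real.sqrt (dist x y ^ 2 +
          α * Metric.infDist x (frontier G) * Metric.infDist y (frontier G)) := by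
  set t := dist x y with ht
  set a := Metric.infDist x (frontier G) with hadef
  set b := Metric.infDist y (frontier G) with hbdef
  have ha : 0 ≤ a := Metric.infDist_nonneg
  have hb : 0 ≤ b := Metric.infDist_nonneg
  have ht0 : 0 ≤ t := dist_nonneg
  have hab : a ≤ b + t := by
    have := Metric.infDist_le_infDist_add_dist (x := x) (y := y) (s := frontier G)
    rw [dist_comm] at this
    simpa [← ht, ← hadef, ← hbdef, dist_comm] using
      Metric.infDist_le_infDist_add_dist (x := x) (y := y) (s := frontier G)
  have hba : b ≤ a + t := by
    simpa [← ht, ← hadef, ← hbdef, dist_comm] using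
      Metric.infDist_le_infDist_add_dist (x := y) (y := x) (s := frontier G)
  set m := min a b with hm
  have hm0 : 0 ≤ m := le_min ha hb
  have habm : a * b ≤ m * (m + t) := by
    rcases le_total a b with h | h
    · rw [hm, min_eq_left h]; nlinarith
    · rw [hm, min_eq_right h]; nlinarith
  have hX0 : 0 ≤ t ^ 2 + α * a * b := by positivity
  have hmin0 : 0 ≤ min 1 (2 / Real.sqrt α) := le_min zero_le_one (by positivity)
  rcases eq_or_lt_of_le ht0 with h0 | h0
  · rw [← h0]; simp
  have hD : 0 < Real.sqrt (t ^ 2 + α * a * b) := by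
    apply Real.sqrt_pos.2
    nlinarith [mul_nonneg (mul_nonneg hα.le ha) hb, pow_pos h0 2]
  have key : min 1 (2 / Real.sqrt α) * Real.sqrt (t ^ 2 + α * a * b) ≤ t + 2 * m := by
    rcases le_total α 4 with h4 | h4
    · calc min 1 (2 / Real.sqrt α) * Real.sqrt (t ^ 2 + α * a * b)
          ≤ 1 * Real.sqrt (t ^ 2 + α * a * b) :=
            mul_le_mul_of_nonneg_right (min_le_left _ _) (Real.sqrt_nonneg _)
        _ = Real.sqrt (t ^ 2 + α * a * b) := one_mul _
        _ ≤ t + 2 * m := by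
            rw [show t + 2 * m = Real.sqrt ((t + 2 * m) ^ 2) by
              rw [Real.sqrt_sq (by linarith)]]
            apply Real.sqrt_le_sqrt
            nlinarith [mul_nonneg (mul_nonneg ha hb) (by linarith : (0:ℝ) ≤ 4 - α)]
    · have hsα : Real.sqrt α * Real.sqrt α = α := Real.mul_self_sqrt hα.le
      have hsαpos : 0 < Real.sqrt α := Real.sqrt_pos.2 hα
      have h2s : 2 ≤ Real.sqrt α := by nlinarith
      have hmineq : min 1 (2 / Real.sqrt α) = 2 / Real.sqrt α := by
        apply min_eq_right
        rw [div_le_one hsαpos]; linarith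
      rw [hmineq]
      have hL0 : 0 ≤ 2 / Real.sqrt α * Real.sqrt (t ^ 2 + α * a * b) := by positivity
      have hsq : (2 / Real.sqrt α * Real.sqrt (t ^ 2 + α * a * b)) ^ 2 ≤ (t + 2 * m) ^ 2 := by
        have hXsq : Real.sqrt (t ^ 2 + α * a * b) ^ 2 = t ^ 2 + α * a * b :=
          Real.sq_sqrt hX0
        have : (2 / Real.sqrt α * Real.sqrt (t ^ 2 + α * a * b)) ^ 2
            = 4 / α * (t ^ 2 + α * a * b) := by
          rw [mul_pow, hXsq, div_pow, sq (Real.sqrt α), hsα]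
          norm_num
        rw [this, div_mul_eq_mul_div, div_le_iff₀ hα]
        nlinarith [mul_nonneg (by linarith : (0:ℝ) ≤ α - 4) (sq_nonneg t),
          mul_nonneg hα.le (sub_nonneg.2 habm)]
      calc 2 / Real.sqrt α * Real.sqrt (t ^ 2 + α * a * b)
          = Real.sqrt ((2 / Real.sqrt α * Real.sqrt (t ^ 2 + α * a * b)) ^ 2) :=
            (Real.sqrt_sq hL0).symm
        _ ≤ Real.sqrt ((t + 2 * m) ^ 2) := Real.sqrt_le_sqrt hsq
        _ = t + 2 * m := Real.sqrt_sq (by linarith)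
  rw [mul_div_assoc'] at *
  rw [div_le_div_iff₀ (by linarith) hD]
  nlinarith [mul_le_mul_of_nonneg_left key h0.le]
end

section
/- For every domain G ⊊ ℝⁿ, every α > 0, and all points x, y ∈ G, the inequality p^α_G(x,y) ≤ √((α+4)/α) · j*_G(x,y) holds. -/
/-- For every domain `G ⊊ ℝⁿ`, every `α > 0`, and all `x, y ∈ G`,
`p^α_G(x,y) ≤ √((α+4)/α) · j*_G(x,y)`. -/
theorem stmt_1 (n : ℕ) (hn : 1 ≤ n) (G : Set (EuclideanSpace ℝ (Fin n)))
    (hGopen : IsOpen G) (hGconn : IsConnected G) (hGproper : G ≠ Set.univ)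
    (α : ℝ) (hα : 0 < α)
    (x y : EuclideanSpace ℝ (Fin n)) (hx : x ∈ G) (hy : y ∈ G) :
    dist x y /
        Real.sqrt (dist x y ^ 2 +
          α * Metric.infDist x (frontier G) * Metric.infDist y (frontier G)) ≤
      Real.sqrt ((α + 4) / α) *
        (dist x y /
          (dist x y + 2 * min (Metric.infDist x (frontier G)) (Metric.infDist y (frontier G)))) := by
  set dx := Metric.infDist x (frontier G) with hdxdef
  set dy := Metric.infDist y (frontier G) with hdydef
  have hdx : 0 ≤ dx := Metric.infDist_nonneg
  have hdy : 0 ≤ dy := Metric.infDist_nonneg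
  set t := dist x y with htdef
  have ht0 : 0 ≤ t := dist_nonneg
  set m := min dx dy with hmdef
  have hm0 : 0 ≤ m := le_min hdx hdy
  rcases eq_or_lt_of_le ht0 with ht | ht
  · simp [← ht]
  · have hA : 0 < t ^ 2 + α * dx * dy := by positivity
    have hAs : 0 < Real.sqrt (t ^ 2 + α * dx * dy) := Real.sqrt_pos.mpr hA
    have hB : 0 < t + 2 * m := by linarith
    have hmm : m * m ≤ dx * dy := mul_le_mul (min_le_left _ _) (min_le_right _ _) hm0 hdx
    rw [div_le_iff₀ hAs,
      show Real.sqrt ((α + 4) / α) * (t / (t + 2 * m)) * Real.sqrt (t ^ 2 + α * dx * dy)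
          = Real.sqrt ((α + 4) / α) * t * Real.sqrt (t ^ 2 + α * dx * dy) / (t + 2 * m) by ring,
      le_div_iff₀ hB]
    have key : t + 2 * m ≤ Real.sqrt ((α + 4) / α) * Real.sqrt (t ^ 2 + α * dx * dy) := by
      rw [← Real.sqrt_mul (by positivity)]
      rw [show t + 2 * m = Real.sqrt ((t + 2 * m) ^ 2) from (Real.sqrt_sq hB.le).symm]
      apply Real.sqrt_le_sqrt
      rw [div_mul_eq_mul_div, le_div_iff₀ hα]
      nlinarith [sq_nonneg (2 * t - α * m), mul_le_mul_of_nonneg_left hmm (sq_nonneg α),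
        mul_le_mul_of_nonneg_left hmm hα.le]
    calc t * (t + 2 * m) ≤ t * (Real.sqrt ((α + 4) / α) * Real.sqrt (t ^ 2 + α * dx * dy)) := by
          exact mul_le_mul_of_nonneg_left key ht0
      _ = Real.sqrt ((α + 4) / α) * t * Real.sqrt (t ^ 2 + α * dx * dy) := by ring
end

section
/- Let G ⊊ ℝⁿ be a domain and α > 0. If x, y ∈ G are distinct points with d_G(x) = d_G(y) and |x−y| = (α/2)·d_G(x), then equality p^α_G(x,y) = √((α+4)/α) · j*_G(x,y) holds. -/
/-- If `x, y ∈ G` are distinct points with `d_G(x) = d_G(y)` and `|x−y| = (α/2)·d_G(x)`,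
then `p^α_G(x,y) = √((α+4)/α) · j*_G(x,y)`. -/
theorem stmt_2 (n : ℕ) (hn : 1 ≤ n) (G : Set (EuclideanSpace ℝ (Fin n)))
    (hGopen : IsOpen G) (hGconn : IsConnected G) (hGproper : G ≠ Set.univ)
    (α : ℝ) (hα : 0 < α)
    (x y : EuclideanSpace ℝ (Fin n)) (hx : x ∈ G) (hy : y ∈ G) (hxy : x ≠ y)
    (hd : Metric.infDist x (frontier G) = Metric.infDist y (frontier G))
    (hdist : dist x y = α / 2 * Metric.infDist x (frontier G)) :
    dist x y /
        Real.sqrt (dist x y ^ 2 +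
          α * Metric.infDist x (frontier G) * Metric.infDist y (frontier G)) =
      Real.sqrt ((α + 4) / α) *
        (dist x y /
          (dist x y + 2 * min (Metric.infDist x (frontier G)) (Metric.infDist y (frontier G)))) := by
  set d := Metric.infDist x (frontier G) with hdd
  have hfr : (frontier G).Nonempty := by
    rw [Set.nonempty_iff_ne_empty]
    intro h
    have hcl : IsClopen G := isClopen_iff_frontier_eq_empty.mpr h
    rcases isClopen_iff.mp hcl with h1 | h1
    · exact hGconn.nonempty.ne_empty h1
    · exact hGproper h1
  have hd0 : 0 < d := by
    rw [hdd]
    refine (isClosed_frontier.notMem_iff_infDist_pos hfr).mp ?_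
    intro hxf
    rw [hGopen.frontier_eq] at hxf
    exact hxf.2 hx
  rw [← hd, hdist, min_self]
  have h4 : (0:ℝ) < α + 4 := by linarith
  have e1 : Real.sqrt ((α / 2 * d) ^ 2 + α * d * d) = d * Real.sqrt (α ^ 2 / 4 + α) := by
    rw [show (α / 2 * d) ^ 2 + α * d * d = d ^ 2 * (α ^ 2 / 4 + α) by ring,
      Real.sqrt_mul (sq_nonneg d), Real.sqrt_sq hd0.le]
  rw [e1]
  have e2 : Real.sqrt (α ^ 2 / 4 + α) = Real.sqrt α * Real.sqrt (α + 4) / 2 := by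
    rw [show α ^ 2 / 4 + α = α * (α + 4) / 4 by ring,
      Real.sqrt_div (by positivity : (0:ℝ) ≤ α * (α + 4)),
      show Real.sqrt 4 = 2 by rw [show (4:ℝ) = 2 ^ 2 by norm_num, Real.sqrt_sq (by norm_num)],
      Real.sqrt_mul hα.le]
  rw [e2, Real.sqrt_div h4.le]
  have ha : 0 < Real.sqrt α := Real.sqrt_pos.mpr hα
  have hb : 0 < Real.sqrt (α + 4) := Real.sqrt_pos.mpr h4
  have ha2 : Real.sqrt α ^ 2 = α := Real.sq_sqrt hα.le
  have hb2 : Real.sqrt (α + 4) ^ 2 = α + 4 := Real.sq_sqrt h4.le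
  set a := Real.sqrt α
  set b := Real.sqrt (α + 4)
  rw [← ha2]
  have hab : a ^ 2 + 4 = b ^ 2 := by rw [ha2, hb2]
  rw [show a ^ 2 / 2 * d + 2 * d = d * (a ^ 2 + 4) / 2 by ring, hab]
  field_simp
end

section
/- For every domain G ⊊ ℝⁿ, every α > 0, and every ε > 0, there exist distinct points x, y ∈ G such that p^α_G(x,y) < (min{1, 2/√α} + ε) · j*_G(x,y); that is, the constant min{1, 2/√α} in the lower bound min{1, 2/√α}·j*_G(x,y) ≤ p^α_G(x,y) is best possible for every choice of the domain G. -/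
private lemma aux_div (t m S K : ℝ) (ht : 0 < t) (hm : 0 ≤ m) (hS : 0 < S)
    (h : t + 2 * m < K * Real.sqrt S) :
    t / Real.sqrt S < K * (t / (t + 2 * m)) := by
  have hs : 0 < Real.sqrt S := Real.sqrt_pos.mpr hS
  have hden : 0 < t + 2 * m := by linarith
  rw [mul_div_assoc' K t (t + 2 * m), div_lt_div_iff₀ hs hden]
  nlinarith

set_option maxHeartbeats 1000000 in
/-- For every domain `G ⊊ ℝⁿ`, every `α > 0`, and every `ε > 0` there are distinct points
`x, y ∈ G` with `p^α_G(x,y) < (min{1, 2/√α} + ε) · j*_G(x,y)`: the constant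
`min{1, 2/√α}` in the lower bound `min{1, 2/√α}·j*_G ≤ p^α_G` is best possible
for every choice of the domain `G`. -/
theorem stmt_3 (n : ℕ) (hn : 1 ≤ n) (G : Set (EuclideanSpace ℝ (Fin n)))
    (hGopen : IsOpen G) (hGconn : IsConnected G) (hGproper : G ≠ Set.univ)
    (α : ℝ) (hα : 0 < α) (ε : ℝ) (hε : 0 < ε) :
    ∃ x ∈ G, ∃ y ∈ G, x ≠ y ∧
      dist x y /
          Real.sqrt (dist x y ^ 2 +
            α * Metric.infDist x (frontier G) * Metric.infDist y (frontier G)) <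
        (min 1 (2 / Real.sqrt α) + ε) *
          (dist x y /
            (dist x y + 2 * min (Metric.infDist x (frontier G)) (Metric.infDist y (frontier G)))) := by
  have hsqα : 0 < Real.sqrt α := Real.sqrt_pos.mpr hα
  -- no point of G lies on the frontier
  have hnotfr : ∀ w ∈ G, w ∉ frontier G := by
    intro w hw hwf
    rw [hGopen.frontier_eq] at hwf
    exact hwf.2 hw
  -- frontier is nonempty
  have hfr : (frontier G).Nonempty := nonempty_frontier_iff.mpr ⟨hGconn.nonempty, hGproper⟩
  have hfrcl : IsClosed (frontier G) := isClosed_frontier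
  -- distance to frontier is positive at interior points
  have hdpos : ∀ w ∈ G, 0 < Metric.infDist w (frontier G) :=
    fun w hw => (hfrcl.notMem_iff_infDist_pos hfr).mp (hnotfr w hw)
  obtain ⟨x, hx⟩ := hGconn.nonempty
  have hdx : 0 < Metric.infDist x (frontier G) := hdpos x hx
  rcases le_total α 4 with hα4 | hα4
  · -- case α ≤ 4 : min = 1; take y close to the frontier
    have hmin : min 1 (2 / Real.sqrt α) = 1 := by
      refine min_eq_left ?_
      rw [le_div_iff₀ hsqα, one_mul]
      calc Real.sqrt α ≤ Real.sqrt 4 := Real.sqrt_le_sqrt hα4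
        _ = 2 := by
            rw [show (4:ℝ) = 2 ^ 2 by norm_num, Real.sqrt_sq (by norm_num)]
    obtain ⟨z, hz⟩ := hfr
    have hxz : x ≠ z := fun h => hnotfr x hx (h ▸ hz)
    have hr : 0 < dist x z := dist_pos.mpr hxz
    set r : ℝ := dist x z with hr_def
    set δ : ℝ := min (r / 2) (ε * r / 4) with hδ_def
    have hδpos : 0 < δ := lt_min (by linarith) (by positivity)
    have hδr : δ ≤ r / 2 := min_le_left _ _
    have hδε : δ ≤ ε * r / 4 := min_le_right _ _
    obtain ⟨y, hyG, hyz⟩ := Metric.mem_closure_iff.mp (frontier_subset_closure hz) δ hδpos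
    rw [dist_comm] at hyz
    have hdy : 0 < Metric.infDist y (frontier G) := hdpos y hyG
    have hdyδ : Metric.infDist y (frontier G) < δ :=
      lt_of_le_of_lt (Metric.infDist_le_dist_of_mem hz) hyz
    have htr : r - δ ≤ dist x y := by
      have h1 : dist x z ≤ dist x y + dist y z := dist_triangle x y z
      rw [← hr_def] at h1
      linarith
    have ht : 0 < dist x y := by linarith
    have hxy : x ≠ y := dist_pos.mp ht
    refine ⟨x, hx, y, hyG, hxy, ?_⟩
    rw [hmin]
    have hS : 0 < dist x y ^ 2 +
        α * Metric.infDist x (frontier G) * Metric.infDist y (frontier G) := by positivity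
    refine aux_div _ _ _ _ ht (le_min hdx.le hdy.le) hS ?_
    have hsqrtS : dist x y ≤ Real.sqrt (dist x y ^ 2 +
        α * Metric.infDist x (frontier G) * Metric.infDist y (frontier G)) := by
      rw [show (dist x y ^ 2 +
        α * Metric.infDist x (frontier G) * Metric.infDist y (frontier G)) =
        dist x y ^ 2 + α * Metric.infDist x (frontier G) * Metric.infDist y (frontier G)
        from rfl]
      nth_rewrite 1 [show dist x y = Real.sqrt (dist x y ^ 2) by rw [Real.sqrt_sq ht.le]]
      exact Real.sqrt_le_sqrt (le_add_of_nonneg_right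
        (mul_nonneg (mul_nonneg hα.le hdx.le) hdy.le))
    have hm : min (Metric.infDist x (frontier G)) (Metric.infDist y (frontier G)) ≤
        Metric.infDist y (frontier G) := min_le_right _ _
    have h2m : 2 * min (Metric.infDist x (frontier G)) (Metric.infDist y (frontier G)) <
        ε * dist x y := by
      have hεt : ε * (r / 2) ≤ ε * dist x y := by nlinarith
      nlinarith
    have hfin : (1 + ε) * dist x y ≤ (1 + ε) * Real.sqrt (dist x y ^ 2 +
        α * Metric.infDist x (frontier G) * Metric.infDist y (frontier G)) := by nlinarith
    linarith
  · -- case 4 ≤ α : min = 2/√α; take y close to x inside G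
    have hsqα4 : 2 ≤ Real.sqrt α := by
      calc (2:ℝ) = Real.sqrt 4 := by
            rw [show (4:ℝ) = 2 ^ 2 by norm_num, Real.sqrt_sq (by norm_num)]
        _ ≤ Real.sqrt α := Real.sqrt_le_sqrt hα4
    have hmin : min 1 (2 / Real.sqrt α) = 2 / Real.sqrt α := by
      refine min_eq_right ?_
      rw [div_le_one hsqα]; exact hsqα4
    obtain ⟨ρ, hρpos, hρball⟩ := Metric.isOpen_iff.mp hGopen x hx
    set d : ℝ := Metric.infDist x (frontier G) with hd_def
    set δ : ℝ := ε * Real.sqrt α with hδ_def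
    have hδpos : 0 < δ := by positivity
    set t : ℝ := min ρ (δ * d / (3 + δ)) / 2 with ht_def
    have htpos : 0 < t := by
      have h1 : 0 < δ * d / (3 + δ) := by positivity
      have h2 := lt_min hρpos h1
      positivity
    have htρ : t < ρ := by
      have := min_le_left ρ (δ * d / (3 + δ))
      linarith
    have htd : t ≤ δ * d / (3 + δ) / 2 := by
      have := min_le_right ρ (δ * d / (3 + δ))
      linarith
    have htdx : t < d := by
      have h1 : δ * d / (3 + δ) < d := by
        rw [div_lt_iff₀ (by linarith)]
        nlinarith
      linarith
    have hne : 0 < n := hn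
    set e : EuclideanSpace ℝ (Fin n) := EuclideanSpace.single ⟨0, hne⟩ t with he_def
    set y : EuclideanSpace ℝ (Fin n) := x + e with hy_def
    have hdist : dist x y = t := by
      rw [hy_def, dist_eq_norm]
      simp only [he_def, sub_add_cancel_left, norm_neg]
      rw [EuclideanSpace.norm_single, Real.norm_eq_abs, abs_of_pos htpos]
    have hyG : y ∈ G := by
      apply hρball
      rw [Metric.mem_ball, dist_comm, hdist]
      exact htρ
    have hdy : 0 < Metric.infDist y (frontier G) := hdpos y hyG
    have hdylb : d - t ≤ Metric.infDist y (frontier G) := by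
      have h1 : Metric.infDist x (frontier G) ≤
          Metric.infDist y (frontier G) + dist x y :=
        Metric.infDist_le_infDist_add_dist
      rw [← hd_def, hdist] at h1
      linarith
    have hxy : x ≠ y := by
      intro h
      rw [h, dist_self] at hdist
      linarith
    refine ⟨x, hx, y, hyG, hxy, ?_⟩
    rw [hmin]
    have hS : 0 < dist x y ^ 2 +
        α * Metric.infDist x (frontier G) * Metric.infDist y (frontier G) := by
      have := dist_pos.mpr hxy
      positivity
    refine aux_div _ _ _ _ (dist_pos.mpr hxy) (le_min hdx.le hdy.le) hS ?_
    rw [hdist]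
    set dy : ℝ := Metric.infDist y (frontier G) with hdy_def
    rw [← hd_def]
    have hdylb' : d - t ≤ dy := hdylb
    have hdy' : 0 < dy := hdy
    clear hd_def ht_def hdy_def he_def hy_def
    clear_value d δ t dy e y
    have hsq1 : Real.sqrt (α * d * dy) ≤ Real.sqrt (t ^ 2 + α * d * dy) :=
      Real.sqrt_le_sqrt (le_add_of_nonneg_left (sq_nonneg t))
    have hdd : (d - t) ^ 2 ≤ d * dy := by nlinarith
    have hsq2 : Real.sqrt α * (d - t) ≤ Real.sqrt (α * d * dy) := by
      calc Real.sqrt α * (d - t) = Real.sqrt α * Real.sqrt ((d - t) ^ 2) := by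
            rw [Real.sqrt_sq (by linarith)]
        _ = Real.sqrt (α * (d - t) ^ 2) := by rw [Real.sqrt_mul hα.le]
        _ ≤ Real.sqrt (α * (d * dy)) :=
            Real.sqrt_le_sqrt (mul_le_mul_of_nonneg_left hdd hα.le)
        _ = Real.sqrt (α * d * dy) := by rw [mul_assoc]
    have hK : (2 / Real.sqrt α + ε) * Real.sqrt α = 2 + δ := by
      rw [add_mul, div_mul_cancel₀ _ hsqα.ne', hδ_def]
    have h2 : (3 + δ) * t ≤ δ * d / 2 := by
      have h3 : (3 + δ) * t ≤ (3 + δ) * (δ * d / (3 + δ) / 2) :=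
        mul_le_mul_of_nonneg_left htd (by linarith)
      have h4 : (3 + δ) * (δ * d / (3 + δ) / 2) = δ * d / 2 := by
        field_simp
      linarith
    have hmain : t + 2 * d < (2 + δ) * (d - t) := by nlinarith [mul_pos hδpos hdx, h2]
    have hfinal : (2 + δ) * (d - t) ≤
        (2 / Real.sqrt α + ε) * Real.sqrt (t ^ 2 + α * d * dy) := by
      calc (2 + δ) * (d - t) = (2 / Real.sqrt α + ε) * (Real.sqrt α * (d - t)) := by
            rw [← mul_assoc, hK]
        _ ≤ (2 / Real.sqrt α + ε) * Real.sqrt (α * d * dy) := by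
            apply mul_le_mul_of_nonneg_left hsq2 (by positivity)
        _ ≤ (2 / Real.sqrt α + ε) * Real.sqrt (t ^ 2 + α * d * dy) := by
            apply mul_le_mul_of_nonneg_left hsq1 (by positivity)
    have hmle : min d dy ≤ d := min_le_left _ _
    linarith
end

section
/- Let G ⊊ ℝⁿ be a domain and α > 0. Suppose l ∈ G and r > 0 are such that the open ball B(l, r) is contained in G and there are points u, v ∈ ∂G with |u−l| = |v−l| = r and u + v = 2l (i.e., the endpoints of a diameter of the ball lie on ∂G). Then the points x = l + α(u−l)/(α+4) and y = l + α(v−l)/(α+4) lie in G, satisfy d_G(x) = d_G(y) = 4r/(α+4) and |x−y| = (α/2)·d_G(x), and hence p^α_G(x,y) = √((α+4)/α) · j*_G(x,y); in particular √((α+4)/α) is the best possible constant c such that p^α_G ≤ c·j*_G holds in such a domain. -/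
lemma key_arith (α d : ℝ) (hα : 0 < α) (hd : 0 < d) :
    (α / 2 * d) / Real.sqrt ((α / 2 * d) ^ 2 + α * d * d) =
      Real.sqrt ((α + 4) / α) * ((α / 2 * d) / (α / 2 * d + 2 * d)) := by
  have hα4 : (0:ℝ) < α + 4 := by linarith
  set s := Real.sqrt (α * (α + 4)) with hs_def
  have hs2 : s ^ 2 = α * (α + 4) := Real.sq_sqrt (by positivity)
  have hs : 0 < s := Real.sqrt_pos.mpr (by positivity)
  have h1 : Real.sqrt ((α / 2 * d) ^ 2 + α * d * d) = d * s / 2 := by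
    rw [show (α / 2 * d) ^ 2 + α * d * d = (d / 2) ^ 2 * (α * (α + 4)) by ring,
      Real.sqrt_mul (sq_nonneg _), Real.sqrt_sq (by positivity)]
    ring
  have h2 : Real.sqrt ((α + 4) / α) = s / α := by
    rw [show (α + 4) / α = (α * (α + 4)) / α ^ 2 by field_simp,
      Real.sqrt_div (by positivity), Real.sqrt_sq hα.le]
  rw [h1, h2]
  field_simp
  linear_combination (-1) * hs2


/-- If `G` contains an open ball `B(l,r)` whose diameter endpoints `u, v` lie on `∂G`,
then the points `x = l + α(u−l)/(α+4)` and `y = l + α(v−l)/(α+4)` lie in `G`, satisfy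
`d_G(x) = d_G(y) = 4r/(α+4)` and `|x−y| = (α/2)·d_G(x)`, hence
`p^α_G(x,y) = √((α+4)/α) · j*_G(x,y)`; in particular `√((α+4)/α)` is the best possible
constant `c` with `p^α_G ≤ c·j*_G` in such a domain. -/
theorem stmt_4 (n : ℕ) (hn : 1 ≤ n) (G : Set (EuclideanSpace ℝ (Fin n)))
    (hGopen : IsOpen G) (hGconn : IsConnected G) (hGproper : G ≠ Set.univ)
    (α : ℝ) (hα : 0 < α)
    (l : EuclideanSpace ℝ (Fin n)) (r : ℝ) (hr : 0 < r) (hl : l ∈ G)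
    (hball : Metric.ball l r ⊆ G)
    (u v : EuclideanSpace ℝ (Fin n)) (hu : u ∈ frontier G) (hv : v ∈ frontier G)
    (hur : dist u l = r) (hvr : dist v l = r) (huv : u + v = (2 : ℝ) • l)
    (x y : EuclideanSpace ℝ (Fin n))
    (hxdef : x = l + (α / (α + 4)) • (u - l))
    (hydef : y = l + (α / (α + 4)) • (v - l)) :
    x ∈ G ∧ y ∈ G ∧
      Metric.infDist x (frontier G) = 4 * r / (α + 4) ∧
      Metric.infDist y (frontier G) = 4 * r / (α + 4) ∧
      dist x y = α / 2 * Metric.infDist x (frontier G) ∧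
      dist x y /
          Real.sqrt (dist x y ^ 2 +
            α * Metric.infDist x (frontier G) * Metric.infDist y (frontier G)) =
        Real.sqrt ((α + 4) / α) *
          (dist x y /
            (dist x y +
              2 * min (Metric.infDist x (frontier G)) (Metric.infDist y (frontier G)))) ∧
      ∀ c : ℝ,
        (∀ a ∈ G, ∀ b ∈ G,
            dist a b /
                Real.sqrt (dist a b ^ 2 +
                  α * Metric.infDist a (frontier G) * Metric.infDist b (frontier G)) ≤
              c *
                (dist a b /
                  (dist a b +
                    2 * min (Metric.infDist a (frontier G)) (Metric.infDist b (frontier G))))) →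
          Real.sqrt ((α + 4) / α) ≤ c := by
  have hα4 : (0:ℝ) < α + 4 := by linarith
  have ht : (0:ℝ) < α / (α + 4) := div_pos hα hα4
  have ht1 : α / (α + 4) < 1 := by
    rw [div_lt_one hα4]; linarith
  have hul : ‖u - l‖ = r := by rw [← dist_eq_norm, hur]
  have hvl : ‖v - l‖ = r := by rw [← dist_eq_norm, hvr]
  -- distances to the center
  have hxl : dist x l = α / (α + 4) * r := by
    rw [hxdef, dist_eq_norm, add_sub_cancel_left, norm_smul, hul,
      Real.norm_eq_abs, abs_of_pos ht]
  have hyl : dist y l = α / (α + 4) * r := by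
    rw [hydef, dist_eq_norm, add_sub_cancel_left, norm_smul, hvl,
      Real.norm_eq_abs, abs_of_pos ht]
  -- membership
  have hxG : x ∈ G := hball (by
    rw [Metric.mem_ball, hxl]
    nlinarith)
  have hyG : y ∈ G := hball (by
    rw [Metric.mem_ball, hyl]
    nlinarith)
  -- distance to the marked boundary points
  have hxu : dist x u = 4 / (α + 4) * r := by
    have : x - u = (α / (α + 4) - 1) • (u - l) := by
      rw [hxdef]; module
    rw [dist_eq_norm, this, norm_smul, hul, Real.norm_eq_abs,
      abs_of_neg (by linarith)]
    field_simp
    ring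
  have hyv : dist y v = 4 / (α + 4) * r := by
    have : y - v = (α / (α + 4) - 1) • (v - l) := by
      rw [hydef]; module
    rw [dist_eq_norm, this, norm_smul, hvl, Real.norm_eq_abs,
      abs_of_neg (by linarith)]
    field_simp
    ring
  -- boundary points are at distance at least r from l
  have hfar : ∀ z ∈ frontier G, r ≤ dist z l := by
    intro z hz
    by_contra h
    push_neg at h
    have hzG : z ∈ G := hball (Metric.mem_ball.mpr h)
    rw [hGopen.frontier_eq] at hz
    exact hz.2 hzG
  have hFne : (frontier G).Nonempty := ⟨u, hu⟩
  -- infDist computations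
  have hsum : 4 * r / (α + 4) + α / (α + 4) * r = r := by field_simp; ring
  have hdx : Metric.infDist x (frontier G) = 4 * r / (α + 4) := by
    refine le_antisymm ((Metric.infDist_le_dist_of_mem hu).trans_eq (by rw [hxu]; ring)) ?_
    refine le_of_not_gt fun hlt => ?_
    obtain ⟨z, hz, hdz⟩ := (Metric.infDist_lt_iff hFne).mp hlt
    have h1 := hfar z hz
    have h2 := dist_triangle z x l
    rw [dist_comm z x] at h2
    rw [hxl] at h2
    linarith
  have hdy : Metric.infDist y (frontier G) = 4 * r / (α + 4) := by
    refine le_antisymm ((Metric.infDist_le_dist_of_mem hv).trans_eq (by rw [hyv]; ring)) ?_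
    refine le_of_not_gt fun hlt => ?_
    obtain ⟨z, hz, hdz⟩ := (Metric.infDist_lt_iff hFne).mp hlt
    have h1 := hfar z hz
    have h2 := dist_triangle z y l
    rw [dist_comm z y] at h2
    rw [hyl] at h2
    linarith
  -- distance between x and y
  have hveq : v = (2:ℝ) • l - u := eq_sub_of_add_eq' huv
  have hdxy : dist x y = α / 2 * (4 * r / (α + 4)) := by
    have hxy : x - y = (2 * (α / (α + 4))) • (u - l) := by
      rw [hxdef, hydef, hveq]; module
    rw [dist_eq_norm, hxy, norm_smul, hul, Real.norm_eq_abs,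
      abs_of_pos (by linarith)]
    field_simp
    ring
  have hd : (0:ℝ) < 4 * r / (α + 4) := by positivity
  refine ⟨hxG, hyG, hdx, hdy, by rw [hdxy, hdx], ?_, ?_⟩
  · rw [hdx, hdy, hdxy, min_self]
    exact key_arith α _ hα hd
  · intro c hc
    have h := hc x hxG y hyG
    rw [hdx, hdy, hdxy, min_self] at h
    rw [key_arith α _ hα hd] at h
    have hQ : 0 < α / 2 * (4 * r / (α + 4)) / (α / 2 * (4 * r / (α + 4)) + 2 * (4 * r / (α + 4))) := by
      positivity
    exact le_of_mul_le_mul_right h hQ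
end

section
/- For every domain G ⊊ ℝⁿ, every 0 < α ≤ 4, and all points x, y ∈ G, the two-sided inequality (1/2)·s_G(x,y) ≤ p^α_G(x,y) ≤ √((α+4)/α)·s_G(x,y) holds. -/
/-- For every domain `G ⊊ ℝⁿ`, every `0 < α ≤ 4`, and all `x, y ∈ G`:
`(1/2)·s_G(x,y) ≤ p^α_G(x,y) ≤ √((α+4)/α)·s_G(x,y)`, where
`s_G(x,y) = |x−y| / inf{|x−z| + |z−y| : z ∈ ∂G}` is the triangular ratio metric. -/
theorem stmt_9 (n : ℕ) (hn : 1 ≤ n) (G : Set (EuclideanSpace ℝ (Fin n)))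
    (hGopen : IsOpen G) (hGconn : IsConnected G) (hGproper : G ≠ Set.univ)
    (α : ℝ) (hα0 : 0 < α) (hα4 : α ≤ 4)
    (x y : EuclideanSpace ℝ (Fin n)) (hx : x ∈ G) (hy : y ∈ G) :
    1 / 2 * (dist x y / sInf ((fun z => dist x z + dist z y) '' frontier G)) ≤
        dist x y /
          Real.sqrt (dist x y ^ 2 +
            α * Metric.infDist x (frontier G) * Metric.infDist y (frontier G)) ∧
      dist x y /
          Real.sqrt (dist x y ^ 2 +
            α * Metric.infDist x (frontier G) * Metric.infDist y (frontier G)) ≤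
        Real.sqrt ((α + 4) / α) *
          (dist x y / sInf ((fun z => dist x z + dist z y) '' frontier G)) := by
  set F := frontier G with hF
  have hFne : F.Nonempty := by
    rw [hF, nonempty_frontier_iff]
    exact ⟨hGconn.nonempty, hGproper⟩
  have hFclosed : IsClosed F := isClosed_frontier
  have hxF : x ∉ F := fun h => h.2 (by rwa [hGopen.interior_eq])
  have hyF : y ∉ F := fun h => h.2 (by rwa [hGopen.interior_eq])
  set dx := Metric.infDist x F with hdx
  set dy := Metric.infDist y F with hdy
  have hdxpos : 0 < dx := (hFclosed.notMem_iff_infDist_pos hFne).mp hxF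
  have hdypos : 0 < dy := (hFclosed.notMem_iff_infDist_pos hFne).mp hyF
  set d := dist x y with hd
  have hd0 : 0 ≤ d := dist_nonneg
  set t := sInf ((fun z => dist x z + dist z y) '' F) with ht
  have hImne : ((fun z => dist x z + dist z y) '' F).Nonempty := hFne.image _
  have hbdd : BddBelow ((fun z => dist x z + dist z y) '' F) := by
    refine ⟨0, fun b hb => ?_⟩
    obtain ⟨z, _, rfl⟩ := hb
    positivity
  -- t ≥ d
  have htd : d ≤ t := by
    refine le_csInf hImne fun b hb => ?_
    obtain ⟨z, _, rfl⟩ := hb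
    exact dist_triangle x z y
  -- t ≥ dx + dy
  have htxy : dx + dy ≤ t := by
    refine le_csInf hImne fun b hb => ?_
    obtain ⟨z, hz, rfl⟩ := hb
    dsimp only
    have h1 : dx ≤ dist x z := Metric.infDist_le_dist_of_mem hz
    have h2 : dy ≤ dist z y := by
      rw [dist_comm]; exact Metric.infDist_le_dist_of_mem hz
    linarith
  have htpos : 0 < t := lt_of_lt_of_le (by linarith) htxy
  -- t ≤ d + 2*dx
  have htub : ∀ w : EuclideanSpace ℝ (Fin n), w ∈ G →
      t ≤ dist x w + dist w y + 2 * Metric.infDist w F := by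
    intro w hw
    have : (t - (dist x w + dist w y)) / 2 ≤ Metric.infDist w F := by
      by_contra hcon
      push_neg at hcon
      obtain ⟨z, hz, hlt⟩ := (Metric.infDist_lt_iff hFne).mp hcon
      have h1 : t ≤ dist x z + dist z y := csInf_le hbdd ⟨z, hz, rfl⟩
      have h2 : dist x z ≤ dist x w + dist w z := dist_triangle x w z
      have h3 : dist z y ≤ dist z w + dist w y := dist_triangle z w y
      have h4 : dist z w = dist w z := dist_comm z w
      linarith
    linarith
  have htdx : t ≤ d + 2 * dx := by
    have := htub x hx
    simpa using this
  have htdy : t ≤ d + 2 * dy := by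
    have := htub y hy
    rw [dist_comm x y] at this
    simpa [dist_comm] using this
  -- t ≤ d + 2*√(dx*dy)
  set m := Real.sqrt (dx * dy) with hm
  have hm0 : 0 ≤ m := Real.sqrt_nonneg _
  have hm2 : m ^ 2 = dx * dy := Real.sq_sqrt (by positivity)
  have htm : t ≤ d + 2 * m := by
    rcases le_total dx dy with h | h
    · have : dx ≤ m := by
        rw [hm]
        refine Real.le_sqrt' hdxpos |>.mpr ?_ |>.trans le_rfl <;> nlinarith
      linarith [htdx]
    · have : dy ≤ m := by
        rw [hm]
        refine Real.le_sqrt' hdypos |>.mpr ?_ |>.trans le_rfl <;> nlinarith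
      linarith [htdy]
  set D := Real.sqrt (d ^ 2 + α * dx * dy) with hD
  have hDpos : 0 < D := Real.sqrt_pos.mpr (by nlinarith [sq_nonneg d, mul_pos (mul_pos hα0 hdxpos) hdypos])
  constructor
  · -- left inequality: d/(2t) ≤ d/D, i.e. D ≤ 2t
    have hD2t : D ≤ 2 * t := by
      rw [hD, show (2 : ℝ) * t = Real.sqrt ((2 * t) ^ 2) from
        (Real.sqrt_sq (by linarith)).symm]
      apply Real.sqrt_le_sqrt
      nlinarith
    have h1 : d / (2 * t) ≤ d / D := div_le_div_of_nonneg_left hd0 hDpos hD2t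
    calc 1 / 2 * (d / t) = d / (2 * t) := by ring
    _ ≤ d / D := h1
  · -- right inequality: t ≤ √((α+4)/α) * D
    have hC0 : (0:ℝ) ≤ (α + 4) / α := by positivity
    have htCD : t ≤ Real.sqrt ((α + 4) / α) * D := by
      rw [hD, ← Real.sqrt_mul hC0]
      rw [show ((α + 4) / α * (d ^ 2 + α * dx * dy)) =
        ((α + 4) * (d ^ 2 + α * dx * dy)) / α by ring]
      rw [Real.le_sqrt (by linarith)]
      rw [le_div_iff₀ hα0]
      rw [show α * dx * dy = α * m ^ 2 by rw [hm2]; ring]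
      nlinarith [sq_nonneg (2 * d - α * m),
        mul_le_mul_of_nonneg_left (mul_self_le_mul_self htpos.le htm) hα0.le]
      positivity
    rw [mul_div_assoc']
    rw [div_le_div_iff₀ hDpos htpos]
    calc d * t ≤ d * (Real.sqrt ((α + 4) / α) * D) :=
      mul_le_mul_of_nonneg_left htCD hd0
    _ = Real.sqrt ((α + 4) / α) * d * D := by ring
end

section
/- For every domain G ⊊ ℝⁿ, every 0 < α < 2, and all points x, y ∈ G, the two-sided inequality t_G(x,y) ≤ p^α_G(x,y) ≤ (4/√(α(4−α)))·t_G(x,y) holds. -/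
/-- For every domain `G ⊊ ℝⁿ`, every `0 < α < 2`, and all `x, y ∈ G`:
`t_G(x,y) ≤ p^α_G(x,y) ≤ (4/√(α(4−α)))·t_G(x,y)`, where
`t_G(x,y) = |x−y| / (|x−y| + d_G(x) + d_G(y))` is the t-metric. -/
theorem stmt_12 (n : ℕ) (hn : 1 ≤ n) (G : Set (EuclideanSpace ℝ (Fin n)))
    (hGopen : IsOpen G) (hGconn : IsConnected G) (hGproper : G ≠ Set.univ)
    (α : ℝ) (hα0 : 0 < α) (hα2 : α < 2)
    (x y : EuclideanSpace ℝ (Fin n)) (hx : x ∈ G) (hy : y ∈ G) :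
    dist x y / (dist x y + Metric.infDist x (frontier G) + Metric.infDist y (frontier G)) ≤
        dist x y /
          Real.sqrt (dist x y ^ 2 +
            α * Metric.infDist x (frontier G) * Metric.infDist y (frontier G)) ∧
      dist x y /
          Real.sqrt (dist x y ^ 2 +
            α * Metric.infDist x (frontier G) * Metric.infDist y (frontier G)) ≤
        4 / Real.sqrt (α * (4 - α)) *
          (dist x y /
            (dist x y + Metric.infDist x (frontier G) + Metric.infDist y (frontier G))) := by
  set r := dist x y with hr
  set a := Metric.infDist x (frontier G) with ha
  set b := Metric.infDist y (frontier G) with hb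
  have hfne : (frontier G).Nonempty := by
    by_contra h
    rw [Set.not_nonempty_iff_eq_empty] at h
    have : IsClopen G := isClopen_iff_frontier_eq_empty.mpr h
    rcases (isClopen_iff.mp this) with h1 | h1
    · exact absurd (h1 ▸ hx) (Set.notMem_empty x)
    · exact hGproper h1
  have hfc : IsClosed (frontier G) := isClosed_frontier
  have hxn : x ∉ frontier G := fun hxf => (hGopen.frontier_eq ▸ hxf).2 hx
  have hyn : y ∉ frontier G := fun hyf => (hGopen.frontier_eq ▸ hyf).2 hy
  have hapos : 0 < a := (hfc.notMem_iff_infDist_pos hfne).mp hxn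
  have hbpos : 0 < b := (hfc.notMem_iff_infDist_pos hfne).mp hyn
  have hrnn : 0 ≤ r := dist_nonneg
  have hlip1 : a ≤ b + r := by
    have := Metric.infDist_le_infDist_add_dist (x := x) (y := y) (s := frontier G)
    simpa [dist_comm, hr, ha, hb] using this
  have hlip2 : b ≤ a + r := by
    have := Metric.infDist_le_infDist_add_dist (x := y) (y := x) (s := frontier G)
    simpa [dist_comm, hr, ha, hb] using this
  have hQpos : 0 < r ^ 2 + α * a * b := by positivity
  have hSpos : 0 < r + a + b := by positivity
  have hcpos : 0 < α * (4 - α) := by nlinarith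
  constructor
  · apply div_le_div_of_nonneg_left hrnn (Real.sqrt_pos.mpr hQpos)
    have h1 : r ^ 2 + α * a * b ≤ (r + a + b) ^ 2 := by nlinarith [mul_pos hapos hbpos, mul_nonneg hrnn hapos.le, mul_nonneg hrnn hbpos.le, sq_nonneg a, sq_nonneg b]
    calc Real.sqrt (r ^ 2 + α * a * b) ≤ Real.sqrt ((r + a + b) ^ 2) :=
          Real.sqrt_le_sqrt h1
      _ = r + a + b := Real.sqrt_sq hSpos.le
  · rw [div_mul_div_comm]
    rw [div_le_div_iff₀ (Real.sqrt_pos.mpr hQpos) (by positivity)]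
    have key : α * (4 - α) * (r + a + b) ^ 2 ≤ 16 * (r ^ 2 + α * a * b) := by
      nlinarith [sq_nonneg ((4 - α) * r - α * (a + b)),
        mul_nonneg (mul_nonneg hα0.le (by linarith : (0:ℝ) ≤ r - a + b))
          (by linarith : (0:ℝ) ≤ r + a - b)]
    have hsq : Real.sqrt (α * (4 - α)) * (r + a + b) ≤ 4 * Real.sqrt (r ^ 2 + α * a * b) := by
      have e1 : Real.sqrt (α * (4 - α)) * (r + a + b)
          = Real.sqrt (α * (4 - α) * (r + a + b) ^ 2) := by
        rw [Real.sqrt_mul hcpos.le, Real.sqrt_sq hSpos.le]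
      have e2 : 4 * Real.sqrt (r ^ 2 + α * a * b)
          = Real.sqrt (16 * (r ^ 2 + α * a * b)) := by
        rw [show (16:ℝ) = 4 ^ 2 by norm_num, Real.sqrt_mul (by positivity), Real.sqrt_sq (by norm_num)]
      rw [e1, e2]
      exact Real.sqrt_le_sqrt key
    calc r * (Real.sqrt (α * (4 - α)) * (r + a + b))
        ≤ r * (4 * Real.sqrt (r ^ 2 + α * a * b)) := by
          exact mul_le_mul_of_nonneg_left hsq hrnn
      _ = 4 * r * Real.sqrt (r ^ 2 + α * a * b) := by ring
end

section
/- For every domain G ⊊ ℝⁿ, every α ≥ 2, and all points x, y ∈ G, the two-sided inequality min{1, 2/√α}·t_G(x,y) ≤ p^α_G(x,y) ≤ 2·t_G(x,y) holds. -/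
/-- For every domain `G ⊊ ℝⁿ`, every `α ≥ 2`, and all `x, y ∈ G`:
`min{1, 2/√α}·t_G(x,y) ≤ p^α_G(x,y) ≤ 2·t_G(x,y)`. -/
theorem stmt_13 (n : ℕ) (hn : 1 ≤ n) (G : Set (EuclideanSpace ℝ (Fin n)))
    (hGopen : IsOpen G) (hGconn : IsConnected G) (hGproper : G ≠ Set.univ)
    (α : ℝ) (hα : 2 ≤ α)
    (x y : EuclideanSpace ℝ (Fin n)) (hx : x ∈ G) (hy : y ∈ G) :
    min 1 (2 / Real.sqrt α) *
          (dist x y /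
            (dist x y + Metric.infDist x (frontier G) + Metric.infDist y (frontier G))) ≤
        dist x y /
          Real.sqrt (dist x y ^ 2 +
            α * Metric.infDist x (frontier G) * Metric.infDist y (frontier G)) ∧
      dist x y /
          Real.sqrt (dist x y ^ 2 +
            α * Metric.infDist x (frontier G) * Metric.infDist y (frontier G)) ≤
        2 *
          (dist x y /
            (dist x y + Metric.infDist x (frontier G) + Metric.infDist y (frontier G))) := by
  set a := Metric.infDist x (frontier G) with ha'
  set b := Metric.infDist y (frontier G) with hb'
  set d := dist x y with hd'
  have hfr : (frontier G).Nonempty := by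
    rw [nonempty_frontier_iff]
    exact ⟨⟨x, hx⟩, hGproper⟩
  have ha : 0 < a := by
    rw [ha', ← isClosed_frontier.notMem_iff_infDist_pos hfr]
    intro h
    exact (hGopen.frontier_eq ▸ h).2 hx
  have hb : 0 < b := by
    rw [hb', ← isClosed_frontier.notMem_iff_infDist_pos hfr]
    intro h
    exact (hGopen.frontier_eq ▸ h).2 hy
  have hd0 : 0 ≤ d := dist_nonneg
  have hab : a ≤ b + d := Metric.infDist_le_infDist_add_dist
  have hba : b ≤ a + d := by
    have h := Metric.infDist_le_infDist_add_dist (x := y) (y := x) (s := frontier G)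
    rwa [dist_comm] at h
  have hα0 : 0 < α := by linarith
  have hS : 0 < d ^ 2 + α * a * b := by positivity
  have hsS : 0 < Real.sqrt (d ^ 2 + α * a * b) := Real.sqrt_pos.mpr hS
  have hden : 0 < d + a + b := by linarith
  constructor
  · -- lower bound
    have key : min 1 (2 / Real.sqrt α) * Real.sqrt (d ^ 2 + α * a * b) ≤ d + a + b := by
      rcases le_total α 4 with h4 | h4
      · have hsa : Real.sqrt α ≤ 2 := by
          rw [show (2:ℝ) = Real.sqrt 4 by
            rw [show (4:ℝ) = 2^2 by norm_num, Real.sqrt_sq (by norm_num)]]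
          exact Real.sqrt_le_sqrt h4
        have hmin : min 1 (2 / Real.sqrt α) = 1 := by
          rw [min_eq_left]
          rw [le_div_iff₀ (Real.sqrt_pos.mpr hα0)]
          linarith
        rw [hmin, one_mul]
        calc Real.sqrt (d ^ 2 + α * a * b) ≤ Real.sqrt ((d + a + b) ^ 2) :=
              Real.sqrt_le_sqrt (by
                nlinarith [sq_nonneg (a - b), mul_pos ha hb,
                  mul_le_mul_of_nonneg_right h4 (mul_pos ha hb).le,
                  mul_nonneg hd0 (by linarith : (0:ℝ) ≤ a + b)])
          _ = d + a + b := Real.sqrt_sq hden.le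
      · have hsa : 2 ≤ Real.sqrt α := by
          rw [show (2:ℝ) = Real.sqrt 4 by
            rw [show (4:ℝ) = 2^2 by norm_num, Real.sqrt_sq (by norm_num)]]
          exact Real.sqrt_le_sqrt h4
        have hsa0 : 0 < Real.sqrt α := by linarith
        have hmin : min 1 (2 / Real.sqrt α) = 2 / Real.sqrt α := by
          rw [min_eq_right]
          rw [div_le_one hsa0]
          exact hsa
        rw [hmin, div_mul_eq_mul_div, div_le_iff₀ hsa0]
        have h1 : 2 * Real.sqrt (d ^ 2 + α * a * b) = Real.sqrt (4 * (d ^ 2 + α * a * b)) := by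
          rw [Real.sqrt_mul (by norm_num), show Real.sqrt 4 = 2 by
            rw [show (4:ℝ) = 2^2 by norm_num, Real.sqrt_sq (by norm_num)]]
        have h2 : (d + a + b) * Real.sqrt α = Real.sqrt (α * (d + a + b) ^ 2) := by
          rw [Real.sqrt_mul hα0.le, Real.sqrt_sq hden.le, mul_comm]
        rw [h1, h2]
        refine Real.sqrt_le_sqrt ?_
        nlinarith [mul_nonneg hα0.le (sq_nonneg (a - b)),
          mul_le_mul_of_nonneg_right h4 (sq_nonneg d),
          mul_nonneg (mul_nonneg hα0.le hd0) (by linarith : (0:ℝ) ≤ a + b)]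
    rw [mul_div_assoc' , div_le_div_iff₀ hden hsS]
    calc min 1 (2 / Real.sqrt α) * d * Real.sqrt (d ^ 2 + α * a * b)
        = d * (min 1 (2 / Real.sqrt α) * Real.sqrt (d ^ 2 + α * a * b)) := by ring
      _ ≤ d * (d + a + b) := by
          apply mul_le_mul_of_nonneg_left key hd0
  · -- upper bound
    have key : d + a + b ≤ 2 * Real.sqrt (d ^ 2 + α * a * b) := by
      have h1 : 2 * Real.sqrt (d ^ 2 + α * a * b) = Real.sqrt (4 * (d ^ 2 + α * a * b)) := by
        rw [Real.sqrt_mul (by norm_num), show Real.sqrt 4 = 2 by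
          rw [show (4:ℝ) = 2^2 by norm_num, Real.sqrt_sq (by norm_num)]]
      rw [h1, show d + a + b = Real.sqrt ((d + a + b) ^ 2) from (Real.sqrt_sq hden.le).symm]
      apply Real.sqrt_le_sqrt
      nlinarith [mul_nonneg (by linarith : (0:ℝ) ≤ b + d - a) (by linarith : (0:ℝ) ≤ a + d - b),
        sq_nonneg (d - a - b), mul_le_mul_of_nonneg_right hα (mul_pos ha hb).le]
    rw [mul_div_assoc', div_le_div_iff₀ hsS hden]
    calc d * (d + a + b) ≤ d * (2 * Real.sqrt (d ^ 2 + α * a * b)) :=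
          mul_le_mul_of_nonneg_left key hd0
      _ = 2 * d * Real.sqrt (d ^ 2 + α * a * b) := by ring
end

section
/- Let G ⊊ ℝⁿ be a domain and 0 < α < 2. If x ∈ G, z ∈ ∂G with |x−z| = d_G(x), and y = x + (α/2)(z−x), then y ∈ G, d_G(y) = (1 − α/2)·d_G(x), and equality p^α_G(x,y) = (4/√(α(4−α)))·t_G(x,y) holds; in particular, 4/√(α(4−α)) is the best possible constant c such that p^α_G ≤ c·t_G for 0 < α < 2. -/
/-- Let `G ⊊ ℝⁿ` be a domain and `0 < α < 2`. If `x ∈ G`, `z ∈ ∂G` with `|x−z| = d_G(x)`,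
and `y = x + (α/2)(z−x)`, then `y ∈ G`, `d_G(y) = (1 − α/2)·d_G(x)`, and
`p^α_G(x,y) = (4/√(α(4−α)))·t_G(x,y)`; in particular, `4/√(α(4−α))` is the best possible
constant `c` with `p^α_G ≤ c·t_G` for `0 < α < 2`. -/
theorem stmt_14 (n : ℕ) (hn : 1 ≤ n) (G : Set (EuclideanSpace ℝ (Fin n)))
    (hGopen : IsOpen G) (hGconn : IsConnected G) (hGproper : G ≠ Set.univ)
    (α : ℝ) (hα0 : 0 < α) (hα2 : α < 2)
    (x z : EuclideanSpace ℝ (Fin n)) (hx : x ∈ G) (hz : z ∈ frontier G)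
    (hxz : dist x z = Metric.infDist x (frontier G))
    (y : EuclideanSpace ℝ (Fin n)) (hydef : y = x + (α / 2) • (z - x)) :
    y ∈ G ∧
      Metric.infDist y (frontier G) = (1 - α / 2) * Metric.infDist x (frontier G) ∧
      dist x y /
          Real.sqrt (dist x y ^ 2 +
            α * Metric.infDist x (frontier G) * Metric.infDist y (frontier G)) =
        4 / Real.sqrt (α * (4 - α)) *
          (dist x y /
            (dist x y + Metric.infDist x (frontier G) + Metric.infDist y (frontier G))) ∧
      ∀ c : ℝ,
        (∀ a ∈ G, ∀ b ∈ G,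
            dist a b /
                Real.sqrt (dist a b ^ 2 +
                  α * Metric.infDist a (frontier G) * Metric.infDist b (frontier G)) ≤
              c *
                (dist a b /
                  (dist a b + Metric.infDist a (frontier G) + Metric.infDist b (frontier G)))) →
          4 / Real.sqrt (α * (4 - α)) ≤ c := by
  set d := Metric.infDist x (frontier G) with hd
  have hfr_closed : IsClosed (frontier G) := isClosed_frontier
  have hfr_ne : (frontier G).Nonempty := ⟨z, hz⟩
  have hxnot : x ∉ frontier G := fun h => (hGopen.frontier_eq ▸ h).2 hx
  have hdpos : 0 < d := (hfr_closed.notMem_iff_infDist_pos hfr_ne).mp hxnot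
  -- ball x d ⊆ G
  have hball : Metric.ball x d ⊆ G := by
    have hsub : Metric.ball x d ⊆ G ∪ (closure G)ᶜ := by
      intro w hw
      have hwnot : w ∉ frontier G := Metric.ball_infDist_subset_compl hw
      by_cases hwc : w ∈ closure G
      · left
        have : w ∈ interior G := by
          rcases (closure_eq_self_union_frontier G ▸ hwc) with h | h
          · rwa [hGopen.interior_eq]
          · exact absurd h hwnot
        exact interior_subset this
      · right; exact hwc
    have hpre : IsPreconnected (Metric.ball x d) := (convex_ball x d).isPreconnected
    have := hpre.subset_left_of_subset_union hGopen isClosed_closure.isOpen_compl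
      (disjoint_compl_right.mono_left subset_closure) hsub
      ⟨x, Metric.mem_ball_self hdpos, hx⟩
    exact this
  have hdxy : dist x y = (α / 2) * d := by
    rw [hydef, dist_eq_norm]
    have : x - (x + (α / 2) • (z - x)) = (α / 2) • (x - z) := by
      module
    rw [this, norm_smul, Real.norm_eq_abs, abs_of_pos (by linarith : (0:ℝ) < α / 2),
      ← dist_eq_norm, hxz]
  have hdyz : dist y z = (1 - α / 2) * d := by
    rw [hydef, dist_eq_norm]
    have : x + (α / 2) • (z - x) - z = (1 - α / 2) • (x - z) := by module
    rw [this, norm_smul, Real.norm_eq_abs, abs_of_pos (by linarith : (0:ℝ) < 1 - α / 2),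
      ← dist_eq_norm, hxz]
  have hyG : y ∈ G := hball (by rw [Metric.mem_ball, dist_comm, hdxy]; nlinarith)
  have hdy : Metric.infDist y (frontier G) = (1 - α / 2) * d := by
    apply le_antisymm
    · calc Metric.infDist y (frontier G) ≤ dist y z := Metric.infDist_le_dist_of_mem hz
        _ = (1 - α / 2) * d := hdyz
    · have h1 : d ≤ Metric.infDist y (frontier G) + dist x y :=
        Metric.infDist_le_infDist_add_dist
      rw [hdxy] at h1; linarith
  refine ⟨hyG, hdy, ?_, ?_⟩
  · -- equality
    set s := Real.sqrt (α * (4 - α)) with hsdef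
    have hs : 0 < s := Real.sqrt_pos.mpr (by nlinarith)
    have hs2 : s ^ 2 = α * (4 - α) := Real.sq_sqrt (by nlinarith)
    have hin : dist x y ^ 2 + α * d * Metric.infDist y (frontier G)
        = (d * s / 2) ^ 2 := by
      rw [hdxy, hdy]; linear_combination (-(d ^ 2) / 4) * hs2
    rw [hin, Real.sqrt_sq (by positivity), hdxy, hdy,
      show α / 2 * d + d + (1 - α / 2) * d = 2 * d by ring]
    field_simp [hdpos.ne']
    ring
  · intro c hc
    have h := hc x hx y hyG
    rw [hdxy, hdy, ← hd] at h
    set s := Real.sqrt (α * (4 - α)) with hsdef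
    have hs : 0 < s := Real.sqrt_pos.mpr (by nlinarith)
    have hs2 : s ^ 2 = α * (4 - α) := Real.sq_sqrt (by nlinarith)
    have hin : (α / 2 * d) ^ 2 + α * d * ((1 - α / 2) * d) = (d * s / 2) ^ 2 := by
      linear_combination (-(d ^ 2) / 4) * hs2
    rw [hin, Real.sqrt_sq (by positivity),
      show α / 2 * d + d + (1 - α / 2) * d = 2 * d by ring] at h
    have hL : α / 2 * d / (d * s / 2) = α / s := by
      field_simp [hdpos.ne']
    have hR : α / 2 * d / (2 * d) = α / 4 := by
      field_simp [hdpos.ne']; ring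
    rw [hL, hR] at h
    rw [div_le_iff₀ hs]
    rw [div_le_iff₀ hs] at h
    nlinarith [h, hα0]
end

section
/- For all points x, y in the open unit ball 𝔹ⁿ of ℝⁿ and every α > 0, the two-sided inequality min{1, 1/√α}·tanh(ρ_{𝔹ⁿ}(x,y)/2) ≤ p^α_{𝔹ⁿ}(x,y) ≤ max{1, 2/√α}·tanh(ρ_{𝔹ⁿ}(x,y)/2) holds; equivalently, min{1, 1/√α}·|x−y|/√(|x−y|² + (1−|x|²)(1−|y|²)) ≤ |x−y|/√(|x−y|² + α(1−|x|)(1−|y|)) ≤ max{1, 2/√α}·|x−y|/√(|x−y|² + (1−|x|²)(1−|y|²)). -/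
private lemma aux1 (d c U V : ℝ) (hd : 0 ≤ d) (hc : 0 ≤ c) (hU : 0 < U) (hV : 0 < V)
    (h : c ^ 2 * V ≤ U) : c * (d / Real.sqrt U) ≤ d / Real.sqrt V := by
  have hsU := Real.sqrt_pos.mpr hU
  have hsV := Real.sqrt_pos.mpr hV
  have h1 : c * Real.sqrt V ≤ Real.sqrt U := by
    have := Real.sqrt_le_sqrt h
    rwa [Real.sqrt_mul (by positivity), Real.sqrt_sq hc] at this
  rw [← mul_div_assoc, div_le_div_iff₀ hsU hsV]
  nlinarith [mul_le_mul_of_nonneg_left h1 hd]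

private lemma aux2 (d m U V : ℝ) (hd : 0 ≤ d) (hm : 0 ≤ m) (hU : 0 < U) (hV : 0 < V)
    (h : U ≤ m ^ 2 * V) : d / Real.sqrt V ≤ m * (d / Real.sqrt U) := by
  have hsU := Real.sqrt_pos.mpr hU
  have hsV := Real.sqrt_pos.mpr hV
  have h1 : Real.sqrt U ≤ m * Real.sqrt V := by
    have := Real.sqrt_le_sqrt h
    rwa [Real.sqrt_mul (by positivity), Real.sqrt_sq hm] at this
  rw [← mul_div_assoc, div_le_div_iff₀ hsV hsU]
  nlinarith [mul_le_mul_of_nonneg_left h1 hd]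

set_option maxHeartbeats 1600000 in
/-- For all `x, y` in the open unit ball `𝔹ⁿ` and `α > 0`:
`min{1, 1/√α}·tanh(ρ_𝔹(x,y)/2) ≤ p^α_𝔹(x,y) ≤ max{1, 2/√α}·tanh(ρ_𝔹(x,y)/2)`, where
`tanh(ρ_𝔹(x,y)/2) = |x−y|/√(|x−y|² + (1−|x|²)(1−|y|²))` and
`p^α_𝔹(x,y) = |x−y|/√(|x−y|² + α(1−|x|)(1−|y|))`. -/
theorem stmt_16 (n : ℕ) (hn : 1 ≤ n) (α : ℝ) (hα : 0 < α)
    (x y : EuclideanSpace ℝ (Fin n)) (hx : ‖x‖ < 1) (hy : ‖y‖ < 1) :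
    min 1 (1 / Real.sqrt α) *
          (dist x y / Real.sqrt (dist x y ^ 2 + (1 - ‖x‖ ^ 2) * (1 - ‖y‖ ^ 2))) ≤
        dist x y / Real.sqrt (dist x y ^ 2 + α * (1 - ‖x‖) * (1 - ‖y‖)) ∧
      dist x y / Real.sqrt (dist x y ^ 2 + α * (1 - ‖x‖) * (1 - ‖y‖)) ≤
        max 1 (2 / Real.sqrt α) *
          (dist x y / Real.sqrt (dist x y ^ 2 + (1 - ‖x‖ ^ 2) * (1 - ‖y‖ ^ 2))) := by
  have hd : (0:ℝ) ≤ dist x y := dist_nonneg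
  have hx0 : (0:ℝ) ≤ ‖x‖ := norm_nonneg x
  have hy0 : (0:ℝ) ≤ ‖y‖ := norm_nonneg y
  set d := dist x y
  have ha : (0:ℝ) < 1 - ‖x‖ := by linarith
  have hb : (0:ℝ) < 1 - ‖y‖ := by linarith
  have hA : (0:ℝ) < 1 - ‖x‖ ^ 2 := by nlinarith
  have hB : (0:ℝ) < 1 - ‖y‖ ^ 2 := by nlinarith
  have hU : (0:ℝ) < d ^ 2 + (1 - ‖x‖ ^ 2) * (1 - ‖y‖ ^ 2) := by
    nlinarith [mul_pos hA hB, sq_nonneg d]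
  have hV : (0:ℝ) < d ^ 2 + α * (1 - ‖x‖) * (1 - ‖y‖) := by
    nlinarith [mul_pos (mul_pos hα ha) hb, sq_nonneg d]
  have hlow : (1 - ‖x‖) * (1 - ‖y‖) ≤ (1 - ‖x‖ ^ 2) * (1 - ‖y‖ ^ 2) := by
    nlinarith [mul_nonneg (mul_nonneg ha.le hb.le)
      (show (0:ℝ) ≤ ‖x‖ + ‖y‖ + ‖x‖ * ‖y‖ by positivity)]
  have hhigh : (1 - ‖x‖ ^ 2) * (1 - ‖y‖ ^ 2) ≤ 4 * ((1 - ‖x‖) * (1 - ‖y‖)) := by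
    nlinarith [mul_nonneg (mul_nonneg ha.le hb.le)
      (show (0:ℝ) ≤ 3 - ‖x‖ - ‖y‖ - ‖x‖ * ‖y‖ by nlinarith)]
  have hsα : 0 < Real.sqrt α := Real.sqrt_pos.mpr hα
  have hsq : Real.sqrt α ^ 2 = α := Real.sq_sqrt hα.le
  constructor
  · rcases le_or_gt α 1 with h1 | h1
    · rw [min_eq_left]
      · have := aux1 d 1 _ _ hd zero_le_one hU hV (by nlinarith)
        simpa using this
      · rw [le_div_iff₀ hsα, one_mul]
        nlinarith [Real.sqrt_nonneg α]
    · rw [min_eq_right]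
      · refine aux1 d _ _ _ hd (by positivity) hU hV ?_
        rw [div_pow, one_pow, hsq, div_mul_eq_mul_div, div_le_iff₀ hα]
        nlinarith
      · rw [div_le_one hsα]
        nlinarith [Real.sqrt_nonneg α]
  · rcases le_or_gt α 4 with h4 | h4
    · have h2 : Real.sqrt α ≤ 2 := by
        have h4' : Real.sqrt α ≤ Real.sqrt 4 := Real.sqrt_le_sqrt h4
        rwa [show (4:ℝ) = 2 ^ 2 by norm_num, Real.sqrt_sq (by norm_num)] at h4'
      rw [max_eq_right]
      · refine aux2 d _ _ _ hd (by positivity) hU hV ?_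
        rw [div_pow, hsq, div_mul_eq_mul_div, le_div_iff₀ hα]
        have e1 : (0:ℝ) ≤ (4 - α) * d ^ 2 := mul_nonneg (by linarith) (sq_nonneg d)
        have e2 : (0:ℝ) ≤ α * (4 * ((1 - ‖x‖) * (1 - ‖y‖)) - (1 - ‖x‖ ^ 2) * (1 - ‖y‖ ^ 2)) :=
          mul_nonneg hα.le (by linarith)
        nlinarith [e1, e2]
      · rw [le_div_iff₀ hsα, one_mul]
        linarith
    · have h2 : (2:ℝ) ≤ Real.sqrt α := by
        have h4' : Real.sqrt 4 ≤ Real.sqrt α := Real.sqrt_le_sqrt h4.le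
        rwa [show (4:ℝ) = 2 ^ 2 by norm_num, Real.sqrt_sq (by norm_num)] at h4'
      have hab : (0:ℝ) ≤ (α - 4) * ((1 - ‖x‖) * (1 - ‖y‖)) :=
        mul_nonneg (by linarith) (mul_pos ha hb).le
      rw [max_eq_left]
      · have := aux2 d 1 _ _ hd zero_le_one hU hV (by nlinarith [hab])
        simpa using this
      · rw [div_le_one hsα]
        linarith
end

section
/- Let f : 𝔹ⁿ → 𝔹ⁿ be a bijection of the open unit ball onto itself that is an isometry of the hyperbolic metric, i.e., |f(x)−f(y)|²/((1−|f(x)|²)(1−|f(y)|²)) = |x−y|²/((1−|x|²)(1−|y|²)) for all x, y ∈ 𝔹ⁿ (as holds for every conformal self-map of 𝔹ⁿ). Then for all x, y ∈ 𝔹ⁿ and every α > 0, min{√α/2, 1/2, 1/√α}·p^α_{𝔹ⁿ}(x,y) ≤ p^α_{𝔹ⁿ}(f(x), f(y)) ≤ max{2/√α, 2, √α}·p^α_{𝔹ⁿ}(x,y). -/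
lemma aux_ppf (d D a a' : ℝ) (hd : 0 ≤ d) (hD : 0 ≤ D) (ha : 0 < a) (ha' : 0 < a')
    (h : D ^ 2 * a ≤ 4 * (d ^ 2 * a')) :
    D / Real.sqrt (D ^ 2 + a') ≤ 2 * (d / Real.sqrt (d ^ 2 + a)) := by
  have hs : 0 < Real.sqrt (d ^ 2 + a) := Real.sqrt_pos.2 (by positivity)
  have hs' : 0 < Real.sqrt (D ^ 2 + a') := Real.sqrt_pos.2 (by positivity)
  rw [mul_div_assoc', div_le_div_iff₀ hs' hs]
  have h1 : D * Real.sqrt (d ^ 2 + a) = Real.sqrt (D ^ 2 * (d ^ 2 + a)) := by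
    rw [Real.sqrt_mul (sq_nonneg D), Real.sqrt_sq hD]
  have h2 : 2 * d * Real.sqrt (D ^ 2 + a') = Real.sqrt ((2 * d) ^ 2 * (D ^ 2 + a')) := by
    rw [Real.sqrt_mul (sq_nonneg (2 * d)), Real.sqrt_sq (by positivity)]
  rw [h1, h2]
  apply Real.sqrt_le_sqrt
  nlinarith [sq_nonneg (d * D)]

lemma aux_key (d D u v u' v' : ℝ) (hu0 : 0 ≤ u) (hv0 : 0 ≤ v) (hu'0 : 0 ≤ u') (hv'0 : 0 ≤ v')
    (hu : u < 1) (hv : v < 1) (hu' : u' < 1) (hv' : v' < 1)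
    (heq : D ^ 2 * ((1 - u ^ 2) * (1 - v ^ 2)) = d ^ 2 * ((1 - u' ^ 2) * (1 - v' ^ 2))) :
    D ^ 2 * ((1 - u) * (1 - v)) ≤ 4 * (d ^ 2 * ((1 - u') * (1 - v'))) := by
  have hterm : 0 ≤ D ^ 2 * ((1 - u) * (1 - v)) := by
    apply mul_nonneg (sq_nonneg D) (mul_nonneg (by linarith) (by linarith))
  have hterm' : 0 ≤ d ^ 2 * ((1 - u') * (1 - v')) := by
    apply mul_nonneg (sq_nonneg d) (mul_nonneg (by linarith) (by linarith))
  calc D ^ 2 * ((1 - u) * (1 - v))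
      ≤ D ^ 2 * ((1 - u) * (1 - v)) * ((1 + u) * (1 + v)) := by
        apply le_mul_of_one_le_right hterm
        nlinarith [mul_nonneg hu0 hv0]
    _ = D ^ 2 * ((1 - u ^ 2) * (1 - v ^ 2)) := by ring
    _ = d ^ 2 * ((1 - u' ^ 2) * (1 - v' ^ 2)) := heq
    _ = d ^ 2 * ((1 - u') * (1 - v')) * ((1 + u') * (1 + v')) := by ring
    _ ≤ d ^ 2 * ((1 - u') * (1 - v')) * 4 := by
        apply mul_le_mul_of_nonneg_left _ hterm'
        nlinarith
    _ = 4 * (d ^ 2 * ((1 - u') * (1 - v'))) := by ring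

/-- If `f : 𝔹ⁿ → 𝔹ⁿ` is a bijection of the open unit ball onto itself which is an isometry
of the hyperbolic metric, i.e. `|f(x)−f(y)|²/((1−|f(x)|²)(1−|f(y)|²)) = |x−y|²/((1−|x|²)(1−|y|²))`
(as holds for conformal self-maps of `𝔹ⁿ`), then for all `x, y ∈ 𝔹ⁿ` and `α > 0`:
`min{√α/2, 1/2, 1/√α}·p^α_𝔹(x,y) ≤ p^α_𝔹(f(x),f(y)) ≤ max{2/√α, 2, √α}·p^α_𝔹(x,y)`. -/
theorem stmt_17 (n : ℕ) (hn : 1 ≤ n) (α : ℝ) (hα : 0 < α)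
    (f : EuclideanSpace ℝ (Fin n) → EuclideanSpace ℝ (Fin n))
    (hbij : Set.BijOn f (Metric.ball 0 1) (Metric.ball 0 1))
    (hiso : ∀ x ∈ Metric.ball (0 : EuclideanSpace ℝ (Fin n)) 1,
      ∀ y ∈ Metric.ball (0 : EuclideanSpace ℝ (Fin n)) 1,
        dist (f x) (f y) ^ 2 / ((1 - ‖f x‖ ^ 2) * (1 - ‖f y‖ ^ 2)) =
          dist x y ^ 2 / ((1 - ‖x‖ ^ 2) * (1 - ‖y‖ ^ 2)))
    (x y : EuclideanSpace ℝ (Fin n))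
    (hx : x ∈ Metric.ball (0 : EuclideanSpace ℝ (Fin n)) 1)
    (hy : y ∈ Metric.ball (0 : EuclideanSpace ℝ (Fin n)) 1) :
    min (Real.sqrt α / 2) (min (1 / 2) (1 / Real.sqrt α)) *
          (dist x y / Real.sqrt (dist x y ^ 2 + α * (1 - ‖x‖) * (1 - ‖y‖))) ≤
        dist (f x) (f y) /
          Real.sqrt (dist (f x) (f y) ^ 2 + α * (1 - ‖f x‖) * (1 - ‖f y‖)) ∧
      dist (f x) (f y) /
          Real.sqrt (dist (f x) (f y) ^ 2 + α * (1 - ‖f x‖) * (1 - ‖f y‖)) ≤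
        max (2 / Real.sqrt α) (max 2 (Real.sqrt α)) *
          (dist x y / Real.sqrt (dist x y ^ 2 + α * (1 - ‖x‖) * (1 - ‖y‖))) := by
  have hfx := hbij.mapsTo hx
  have hfy := hbij.mapsTo hy
  have hu : ‖x‖ < 1 := by simpa using mem_ball_zero_iff.mp hx
  have hv : ‖y‖ < 1 := by simpa using mem_ball_zero_iff.mp hy
  have hu' : ‖f x‖ < 1 := by simpa using mem_ball_zero_iff.mp hfx
  have hv' : ‖f y‖ < 1 := by simpa using mem_ball_zero_iff.mp hfy
  have hu0 : (0:ℝ) ≤ ‖x‖ := norm_nonneg _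
  have hv0 : (0:ℝ) ≤ ‖y‖ := norm_nonneg _
  have hu'0 : (0:ℝ) ≤ ‖f x‖ := norm_nonneg _
  have hv'0 : (0:ℝ) ≤ ‖f y‖ := norm_nonneg _
  have hd : (0:ℝ) ≤ dist x y := dist_nonneg
  have hD : (0:ℝ) ≤ dist (f x) (f y) := dist_nonneg
  have hx2 : (0:ℝ) < 1 - ‖x‖ ^ 2 := by nlinarith
  have hy2 : (0:ℝ) < 1 - ‖y‖ ^ 2 := by nlinarith
  have hx2' : (0:ℝ) < 1 - ‖f x‖ ^ 2 := by nlinarith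
  have hy2' : (0:ℝ) < 1 - ‖f y‖ ^ 2 := by nlinarith
  have hden : (0:ℝ) < (1 - ‖x‖ ^ 2) * (1 - ‖y‖ ^ 2) := mul_pos hx2 hy2
  have hden' : (0:ℝ) < (1 - ‖f x‖ ^ 2) * (1 - ‖f y‖ ^ 2) := mul_pos hx2' hy2'
  have heq : dist (f x) (f y) ^ 2 * ((1 - ‖x‖ ^ 2) * (1 - ‖y‖ ^ 2)) =
      dist x y ^ 2 * ((1 - ‖f x‖ ^ 2) * (1 - ‖f y‖ ^ 2)) := by
    have h := hiso x hx y hy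
    rw [div_eq_div_iff hden'.ne' hden.ne'] at h
    linarith
  have ha : (0:ℝ) < α * (1 - ‖x‖) * (1 - ‖y‖) :=
    mul_pos (mul_pos hα (by linarith)) (by linarith)
  have ha' : (0:ℝ) < α * (1 - ‖f x‖) * (1 - ‖f y‖) :=
    mul_pos (mul_pos hα (by linarith)) (by linarith)
  have h1 := aux_key (dist x y) (dist (f x) (f y)) ‖x‖ ‖y‖ ‖f x‖ ‖f y‖
    hu0 hv0 hu'0 hv'0 hu hv hu' hv' heq
  have h2 := aux_key (dist (f x) (f y)) (dist x y) ‖f x‖ ‖f y‖ ‖x‖ ‖y‖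
    hu'0 hv'0 hu0 hv0 hu' hv' hu hv heq.symm
  have hkey1 : dist (f x) (f y) ^ 2 * (α * (1 - ‖x‖) * (1 - ‖y‖)) ≤
      4 * (dist x y ^ 2 * (α * (1 - ‖f x‖) * (1 - ‖f y‖))) := by
    have := mul_le_mul_of_nonneg_left h1 hα.le
    calc dist (f x) (f y) ^ 2 * (α * (1 - ‖x‖) * (1 - ‖y‖))
        = α * (dist (f x) (f y) ^ 2 * ((1 - ‖x‖) * (1 - ‖y‖))) := by ring
      _ ≤ α * (4 * (dist x y ^ 2 * ((1 - ‖f x‖) * (1 - ‖f y‖)))) := this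
      _ = 4 * (dist x y ^ 2 * (α * (1 - ‖f x‖) * (1 - ‖f y‖))) := by ring
  have hkey2 : dist x y ^ 2 * (α * (1 - ‖f x‖) * (1 - ‖f y‖)) ≤
      4 * (dist (f x) (f y) ^ 2 * (α * (1 - ‖x‖) * (1 - ‖y‖))) := by
    have := mul_le_mul_of_nonneg_left h2 hα.le
    calc dist x y ^ 2 * (α * (1 - ‖f x‖) * (1 - ‖f y‖))
        = α * (dist x y ^ 2 * ((1 - ‖f x‖) * (1 - ‖f y‖))) := by ring
      _ ≤ α * (4 * (dist (f x) (f y) ^ 2 * ((1 - ‖x‖) * (1 - ‖y‖)))) := this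
      _ = 4 * (dist (f x) (f y) ^ 2 * (α * (1 - ‖x‖) * (1 - ‖y‖))) := by ring
  have hupper := aux_ppf (dist x y) (dist (f x) (f y)) _ _ hd hD ha ha' hkey1
  have hlower := aux_ppf (dist (f x) (f y)) (dist x y) _ _ hD hd ha' ha hkey2
  have hp : 0 ≤ dist x y / Real.sqrt (dist x y ^ 2 + α * (1 - ‖x‖) * (1 - ‖y‖)) :=
    div_nonneg hd (Real.sqrt_nonneg _)
  constructor
  · have hmin : min (Real.sqrt α / 2) (min (1 / 2) (1 / Real.sqrt α)) ≤ 1 / 2 :=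
      le_trans (min_le_right _ _) (min_le_left _ _)
    have := mul_le_mul_of_nonneg_right hmin hp
    linarith
  · have hmax : (2:ℝ) ≤ max (2 / Real.sqrt α) (max 2 (Real.sqrt α)) :=
      le_trans (le_max_left 2 (Real.sqrt α)) (le_max_right _ _)
    have := mul_le_mul_of_nonneg_right hmax hp
    linarith
end

section
/- In the upper half-space G = ℍⁿ with α > 0, the points x = (0,...,0,1) and y = (α/2, 0,...,0, 1) satisfy p^α_{ℍⁿ}(x,y) = √((α+4)/α)·j*_{ℍⁿ}(x,y); hence √((α+4)/α) is the best possible constant c in terms of α such that p^α_{ℍⁿ}(x,y) ≤ c·j*_{ℍⁿ}(x,y) for all x, y ∈ ℍⁿ. -/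
lemma key_calc (α : ℝ) (hα : 0 < α) :
    (α / 2) / Real.sqrt ((α / 2) ^ 2 + α * 1 * 1) =
      Real.sqrt ((α + 4) / α) * ((α / 2) / ((α / 2) + 2 * min (1:ℝ) 1)) := by
  have h4 : (0:ℝ) < α + 4 := by linarith
  have hs : Real.sqrt ((α / 2) ^ 2 + α * 1 * 1) = Real.sqrt α * Real.sqrt (α + 4) / 2 := by
    have h : (α / 2) ^ 2 + α * 1 * 1 = (Real.sqrt α * Real.sqrt (α + 4) / 2) ^ 2 := by
      rw [show (Real.sqrt α * Real.sqrt (α + 4) / 2) ^ 2 =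
        Real.sqrt α ^ 2 * Real.sqrt (α + 4) ^ 2 / 4 by ring,
        Real.sq_sqrt hα.le, Real.sq_sqrt h4.le]; ring
    rw [h, Real.sqrt_sq (by positivity)]
  have ha : Real.sqrt α ≠ 0 := by positivity
  have hb : Real.sqrt (α + 4) ≠ 0 := by positivity
  rw [hs, min_self, Real.sqrt_div h4.le]
  rw [div_mul_div_comm, div_eq_div_iff (by positivity) (by positivity)]
  have h2 : Real.sqrt (α + 4) * Real.sqrt (α + 4) = α + 4 := Real.mul_self_sqrt h4.le
  linear_combination (-(α * Real.sqrt α / 4)) * h2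

/-- In the upper half-space `ℍⁿ` (last coordinate positive, `d(x) = xₙ`), with `α > 0`,
the points `x = (0,…,0,1)` and `y = (α/2, 0,…,0, 1)` satisfy
`p^α_ℍ(x,y) = √((α+4)/α)·j*_ℍ(x,y)`; hence `√((α+4)/α)` is the best possible constant `c`
such that `p^α_ℍ(a,b) ≤ c·j*_ℍ(a,b)` for all `a, b ∈ ℍⁿ`. -/
theorem stmt_18 (n : ℕ) (α : ℝ) (hα : 0 < α)
    (x y : EuclideanSpace ℝ (Fin (n + 2)))
    (hxdef : x = EuclideanSpace.single (Fin.last (n + 1)) (1 : ℝ))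
    (hydef : y = EuclideanSpace.single (0 : Fin (n + 2)) (α / 2) +
      EuclideanSpace.single (Fin.last (n + 1)) (1 : ℝ)) :
    dist x y /
        Real.sqrt (dist x y ^ 2 + α * x (Fin.last (n + 1)) * y (Fin.last (n + 1))) =
      Real.sqrt ((α + 4) / α) *
        (dist x y /
          (dist x y + 2 * min (x (Fin.last (n + 1))) (y (Fin.last (n + 1))))) ∧
      ∀ c : ℝ,
        (∀ a b : EuclideanSpace ℝ (Fin (n + 2)),
            0 < a (Fin.last (n + 1)) → 0 < b (Fin.last (n + 1)) →
              dist a b /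
                  Real.sqrt (dist a b ^ 2 +
                    α * a (Fin.last (n + 1)) * b (Fin.last (n + 1))) ≤
                c *
                  (dist a b /
                    (dist a b +
                      2 * min (a (Fin.last (n + 1))) (b (Fin.last (n + 1)))))) →
          Real.sqrt ((α + 4) / α) ≤ c := by
  have hne : (Fin.last (n + 1) : Fin (n + 2)) ≠ 0 := by
    simp [Fin.ext_iff, Fin.last]
  have hd : dist x y = α / 2 := by
    rw [dist_eq_norm, hxdef, hydef]
    have : EuclideanSpace.single (Fin.last (n + 1)) (1 : ℝ) -
        (EuclideanSpace.single (0 : Fin (n + 2)) (α / 2) +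
          EuclideanSpace.single (Fin.last (n + 1)) (1 : ℝ)) =
        -EuclideanSpace.single (0 : Fin (n + 2)) (α / 2) := by abel
    rw [this, norm_neg, EuclideanSpace.norm_single, Real.norm_eq_abs,
      abs_of_pos (by linarith)]
  have hx1 : x (Fin.last (n + 1)) = 1 := by
    rw [hxdef]; simp [EuclideanSpace.single_apply]
  have hy1 : y (Fin.last (n + 1)) = 1 := by
    rw [hydef]
    simp [EuclideanSpace.single_apply, hne.symm]
  rw [hd, hx1, hy1]
  refine ⟨key_calc α hα, fun c hc => ?_⟩
  have := hc x y (by rw [hx1]; norm_num) (by rw [hy1]; norm_num)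
  rw [hd, hx1, hy1, key_calc α hα] at this
  have hj : 0 < (α / 2) / ((α / 2) + 2 * min (1:ℝ) 1) := by
    rw [min_self]; positivity
  exact le_of_mul_le_mul_right this hj
end
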